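/- For a k×l 0-1 pattern P, ssat(P,n,n) = O(1) if and only if all three hold: (1) the first and last row of P each contain a 1 entry that is the only 1 entry in its column; (2) the first and last column of P each contain a 1 entry that is the only 1 entry in its row; (3) P contains a 1 entry that is the only 1 entry in both its row and column. Otherwise ssat(P,n,n) = Θ(n). -/

import Mathlib

/-- `M` contains the pattern `P`: there is an order-preserving selection of rows and
columns of `M` whose submatrix can be turned into `P` by changing `1`s to `0`s. -/
def Contains {k l m n : ℕ} (P : Fin k → Fin l → Bool) (M : Fin m → Fin n → Bool) : Prop :=
  ∃ r : Fin k → Fin m, ∃ c : Fin l → Fin n, StrictMono r ∧ StrictMono c ∧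
    ∀ i j, P i j = true → M (r i) (c j) = true

def Avoids {k l m n : ℕ} (P : Fin k → Fin l → Bool) (M : Fin m → Fin n → Bool) : Prop :=
  ¬ Contains P M

/-- The weight of a 0-1 matrix: the number of its `1` entries. -/
def weight {m n : ℕ} (M : Fin m → Fin n → Bool) : ℕ :=
  (Finset.univ.filter (fun p : Fin m × Fin n => M p.1 p.2 = true)).card

/-- The matrix obtained from `M` by changing the entry at `(p,q)` to `1`. -/
def setOne {m n : ℕ} (M : Fin m → Fin n → Bool) (p : Fin m) (q : Fin n) :
    Fin m → Fin n → Bool :=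
  fun i j => if i = p ∧ j = q then true else M i j

/-- `M` is saturating for `P`: it avoids `P` and flipping any `0` entry creates an
occurrence of `P`. -/
def Saturating {k l m n : ℕ} (P : Fin k → Fin l → Bool) (M : Fin m → Fin n → Bool) : Prop :=
  Avoids P M ∧ ∀ p q, M p q = false → Contains P (setOne M p q)

/-- `(r, c)` is an occurrence of `P` in `M`. -/
def IsOcc {k l m n : ℕ} (P : Fin k → Fin l → Bool) (M : Fin m → Fin n → Bool)
    (r : Fin k → Fin m) (c : Fin l → Fin n) : Prop :=
  StrictMono r ∧ StrictMono c ∧ ∀ i j, P i j = true → M (r i) (c j) = true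

/-- `M` is semisaturating for `P`: flipping any `0` entry creates a new occurrence of `P`. -/
def Semisaturating {k l m n : ℕ} (P : Fin k → Fin l → Bool) (M : Fin m → Fin n → Bool) : Prop :=
  ∀ p q, M p q = false → ∃ r c, IsOcc P (setOne M p q) r c ∧ ¬ IsOcc P M r c

/-- `ex(P,m,n)`: the maximum weight of an `m × n` matrix avoiding `P`. -/
noncomputable def exF {k l : ℕ} (P : Fin k → Fin l → Bool) (m n : ℕ) : ℕ :=
  sSup {w | ∃ M : Fin m → Fin n → Bool, Avoids P M ∧ weight M = w}

/-- `sat(P,m,n)`: the minimum weight of an `m × n` matrix saturating for `P`. -/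
noncomputable def satF {k l : ℕ} (P : Fin k → Fin l → Bool) (m n : ℕ) : ℕ :=
  sInf {w | ∃ M : Fin m → Fin n → Bool, Saturating P M ∧ weight M = w}

/-- `ssat(P,m,n)`: the minimum weight of an `m × n` matrix semisaturating for `P`. -/
noncomputable def ssatF {k l : ℕ} (P : Fin k → Fin l → Bool) (m n : ℕ) : ℕ :=
  sInf {w | ∃ M : Fin m → Fin n → Bool, Semisaturating P M ∧ weight M = w}

/-- for a (not-all-zero) `k × l` pattern `P`, `ssat(P,n,n) = O(1)` if
and only if the three special-entry properties hold; otherwise `ssat(P,n,n) = Θ(n)`. -/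

lemma setOne_of_true {m n : ℕ} {M : Fin m → Fin n → Bool} {p : Fin m} {q : Fin n}
    {a : Fin m} {b : Fin n} (h : M a b = true) : setOne M p q a b = true := by
  unfold setOne; split
  · rfl
  · exact h

lemma strictMono_val_le {k n : ℕ} {f : Fin k → Fin n} (hf : StrictMono f) (i : Fin k) :
    i.val ≤ (f i).val := by
  have H : ∀ m : ℕ, ∀ h : m < k, m ≤ (f ⟨m, h⟩).val := by
    intro m
    induction m with
    | zero => intro h; exact Nat.zero_le _
    | succ a ih =>
      intro h
      have h' : a < k := by omega
      have hlt : f ⟨a, h'⟩ < f ⟨a+1, h⟩ := hf (by simp [Fin.lt_def])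
      have h2 := ih h'
      simp only [Fin.lt_def] at hlt
      omega
  have := H i.val i.isLt
  simpa using this

lemma strictMono_add_lt {k n : ℕ} {f : Fin k → Fin n} (hf : StrictMono f) :
    ∀ d (i : Fin k), i.val + d < k → (f i).val + d < n := by
  intro d
  induction d with
  | zero => intro i _; simp only [Nat.add_zero]; exact (f i).isLt
  | succ d ih =>
    intro i h
    have h3 := ih ⟨i.val+1, by omega⟩ (by simp; omega)
    have hlt : f i < f ⟨i.val+1, by omega⟩ := hf (by simp [Fin.lt_def])
    simp only [Fin.lt_def] at hlt
    omega

lemma place_exists {k n : ℕ} (i₀ p : ℕ) (_hi₀ : i₀ < k) (hp : p < n)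
    (h1 : i₀ ≤ p) (h2 : p + k ≤ n + i₀) :
    ∃ r : Fin k → Fin n, StrictMono r ∧
      (∀ i : Fin k, i.val < i₀ → (r i).val = i.val) ∧
      (∀ i : Fin k, i.val = i₀ → (r i).val = p) ∧
      (∀ i : Fin k, i₀ < i.val → (r i).val = n - k + i.val) := by
  refine ⟨fun i => ⟨if i.val < i₀ then i.val else if i.val = i₀ then p else n - k + i.val,
    by have := i.isLt; split_ifs <;> omega⟩, ?_, ?_, ?_, ?_⟩
  · intro a b hab
    simp only [Fin.lt_def] at hab ⊢
    have ha := a.isLt; have hb := b.isLt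
    split_ifs <;> omega
  · intro i hi; simp [hi]
  · intro i hi; simp [hi]
  · intro i hi
    have : ¬ (i.val < i₀) := by omega
    have h' : ¬ (i.val = i₀) := by omega
    simp [this, h']

lemma weight_ge_of_cols {n : ℕ} {M : Fin n → Fin n → Bool}
    (h : ∀ q : Fin n, ∃ p, M p q = true) : n ≤ weight M := by
  classical
  have hle : (Finset.univ : Finset (Fin n)).card ≤
      (Finset.univ.filter (fun p : Fin n × Fin n => M p.1 p.2 = true)).card := by
    apply Finset.card_le_card_of_injOn (fun q => ((h q).choose, q))
    · intro q _
      simp only [Finset.mem_coe, Finset.mem_filter, Finset.mem_univ, true_and]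
      exact (h q).choose_spec
    · intro a _ b _ hab
      exact congrArg Prod.snd hab
  simpa [weight] using hle

lemma weight_ge_of_rows {n : ℕ} {M : Fin n → Fin n → Bool}
    (h : ∀ p : Fin n, ∃ q, M p q = true) : n ≤ weight M := by
  classical
  have hle : (Finset.univ : Finset (Fin n)).card ≤
      (Finset.univ.filter (fun p : Fin n × Fin n => M p.1 p.2 = true)).card := by
    apply Finset.card_le_card_of_injOn (fun p => (p, (h p).choose))
    · intro p _
      simp only [Finset.mem_coe, Finset.mem_filter, Finset.mem_univ, true_and]
      exact (h p).choose_spec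
    · intro a _ b _ hab
      exact congrArg Prod.fst hab
  simpa [weight] using hle

lemma exists_zero_row {n : ℕ} {M : Fin n → Fin n → Bool} (h : weight M < n) :
    ∃ p, ∀ q, M p q = false := by
  by_contra hc
  push_neg at hc
  have h' : ∀ p : Fin n, ∃ q, M p q = true := by
    intro p; obtain ⟨q, hq⟩ := hc p; exact ⟨q, by simpa using hq⟩
  have := weight_ge_of_rows h'
  omega

lemma exists_zero_col {n : ℕ} {M : Fin n → Fin n → Bool} (h : weight M < n) :
    ∃ q, ∀ p, M p q = false := by
  by_contra hc
  push_neg at hc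
  have h' : ∀ q : Fin n, ∃ p, M p q = true := by
    intro q; obtain ⟨p, hp⟩ := hc q; exact ⟨p, by simpa using hp⟩
  have := weight_ge_of_cols h'
  omega

lemma semisat_extract {k l n : ℕ} {P : Fin k → Fin l → Bool} {M : Fin n → Fin n → Bool}
    (hs : Semisaturating P M) {p q : Fin n} (h0 : M p q = false) :
    ∃ (r : Fin k → Fin n) (c : Fin l → Fin n) (i : Fin k) (j : Fin l),
      StrictMono r ∧ StrictMono c ∧ P i j = true ∧ r i = p ∧ c j = q ∧
      ∀ i' j', P i' j' = true → (i' ≠ i ∨ j' ≠ j) → M (r i') (c j') = true := by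
  obtain ⟨r, c, hocc, hnocc⟩ := hs p q h0
  obtain ⟨hr, hc, hall⟩ := hocc
  have hex : ∃ i j, P i j = true ∧ M (r i) (c j) = false := by
    by_contra hcon
    push_neg at hcon
    exact hnocc ⟨hr, hc, fun i j hij => by simpa using hcon i j hij⟩
  obtain ⟨i, j, hij, hMf⟩ := hex
  have hset := hall i j hij
  have hpq : r i = p ∧ c j = q := by
    by_contra hne
    unfold setOne at hset
    split at hset
    · exact hne (by tauto)
    · rw [hset] at hMf; exact absurd hMf (by simp)
  refine ⟨r, c, i, j, hr, hc, hij, hpq.1, hpq.2, ?_⟩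
  intro i' j' hij' hne
  have hset' := hall i' j' hij'
  unfold setOne at hset'
  split at hset'
  case isTrue hcond =>
    exfalso
    rcases hne with h1 | h1
    · exact h1 (hr.injective (hcond.1.trans hpq.1.symm))
    · exact h1 (hc.injective (hcond.2.trans hpq.2.symm))
  case isFalse => exact hset'

def cornerM (c n : ℕ) : Fin n → Fin n → Bool :=
  fun p q => decide ((p.val < c ∨ n ≤ p.val + c) ∧ (q.val < c ∨ n ≤ q.val + c))

def frameM (k l n : ℕ) : Fin n → Fin n → Bool :=
  fun p q => decide (p.val + 1 < k ∨ n + 1 ≤ p.val + k ∨ q.val + 1 < l ∨ n + 1 ≤ q.val + l)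

lemma card_band_le (n c : ℕ) :
    (Finset.univ.filter fun p : Fin n => p.val < c ∨ n ≤ p.val + c).card ≤ 2 * c := by
  classical
  rw [Finset.filter_or]
  refine le_trans (Finset.card_union_le _ _) ?_
  have h1 : (Finset.univ.filter fun p : Fin n => p.val < c).card ≤ c := by
    have := Finset.card_le_card_of_injOn (fun p : Fin n => p.val)
      (s := Finset.univ.filter fun p : Fin n => p.val < c) (t := Finset.range c)
      (by intro p hp; simp at hp ⊢; omega)
      (by intro a _ b _ hab; exact Fin.ext hab)
    simpa using this
  have h2 : (Finset.univ.filter fun p : Fin n => n ≤ p.val + c).card ≤ c := by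
    have := Finset.card_le_card_of_injOn (fun p : Fin n => p.val + c - n)
      (s := Finset.univ.filter fun p : Fin n => n ≤ p.val + c) (t := Finset.range c)
      (by intro p hp; simp at hp ⊢; have := p.isLt; omega)
      (by intro a ha b hb hab
          simp at ha hb
          dsimp only at hab
          exact Fin.ext (by omega))
    simpa using this
  omega

lemma corner_weight_le (c n : ℕ) : weight (cornerM c n) ≤ (2 * c) * (2 * c) := by
  classical
  unfold weight
  have hsub : (Finset.univ.filter (fun p : Fin n × Fin n => cornerM c n p.1 p.2 = true)) ⊆
      (Finset.univ.filter fun p : Fin n => p.val < c ∨ n ≤ p.val + c) ×ˢ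
      (Finset.univ.filter fun p : Fin n => p.val < c ∨ n ≤ p.val + c) := by
    intro x hx
    simp only [Finset.mem_filter, Finset.mem_univ, true_and, cornerM,
      decide_eq_true_eq] at hx
    simp only [Finset.mem_product, Finset.mem_filter, Finset.mem_univ, true_and]
    exact hx
  refine le_trans (Finset.card_le_card hsub) ?_
  rw [Finset.card_product]
  exact Nat.mul_le_mul (card_band_le n c) (card_band_le n c)

lemma frame_weight_le (k l n : ℕ) : weight (frameM k l n) ≤ 2 * k * n + 2 * l * n := by
  classical
  unfold weight
  have hsub : (Finset.univ.filter (fun p : Fin n × Fin n => frameM k l n p.1 p.2 = true)) ⊆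
      ((Finset.univ.filter fun p : Fin n => p.val < k ∨ n ≤ p.val + k) ×ˢ Finset.univ) ∪
      (Finset.univ ×ˢ (Finset.univ.filter fun q : Fin n => q.val < l ∨ n ≤ q.val + l)) := by
    intro x hx
    simp only [Finset.mem_filter, Finset.mem_univ, true_and, frameM,
      decide_eq_true_eq] at hx
    simp only [Finset.mem_union, Finset.mem_product, Finset.mem_filter, Finset.mem_univ,
      true_and, and_true]
    rcases hx with h | h | h | h
    · exact Or.inl (Or.inl (by omega))
    · exact Or.inl (Or.inr (by omega))
    · exact Or.inr (Or.inl (by omega))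
    · exact Or.inr (Or.inr (by omega))
  refine le_trans (Finset.card_le_card hsub) ?_
  refine le_trans (Finset.card_union_le _ _) ?_
  rw [Finset.card_product, Finset.card_product]
  simp only [Finset.card_univ, Fintype.card_fin]
  have h1 := card_band_le n k
  have h2 := card_band_le n l
  nlinarith

lemma mk_occ {k l n : ℕ} {P : Fin k → Fin l → Bool} {M : Fin n → Fin n → Bool} {p q : Fin n}
    (hM : M p q = false) {i₀ : Fin k} {j₀ : Fin l} (hP : P i₀ j₀ = true)
    {r : Fin k → Fin n} {c : Fin l → Fin n} (hr : StrictMono r) (hc : StrictMono c)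
    (hrp : r i₀ = p) (hcq : c j₀ = q)
    (hoth : ∀ i j, P i j = true → ¬(i = i₀ ∧ j = j₀) → M (r i) (c j) = true) :
    ∃ r' c', IsOcc P (setOne M p q) r' c' ∧ ¬ IsOcc P M r' c' := by
  refine ⟨r, c, ⟨hr, hc, ?_⟩, ?_⟩
  · intro i j hij
    by_cases hcase : i = i₀ ∧ j = j₀
    · obtain ⟨h1, h2⟩ := hcase
      subst h1; subst h2
      rw [hrp, hcq]
      unfold setOne
      simp
    · exact setOne_of_true (hoth i j hij hcase)
  · rintro ⟨_, _, hall⟩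
    have hfin := hall i₀ j₀ hP
    rw [hrp, hcq, hM] at hfin
    exact absurd hfin (by simp)

lemma frame_semisat {k l n : ℕ} (P : Fin k → Fin l → Bool) (i₀ : Fin k) (j₀ : Fin l)
    (hP : P i₀ j₀ = true) : Semisaturating P (frameM k l n) := by
  intro p q hpq
  have hfalse : ¬(p.val + 1 < k ∨ n + 1 ≤ p.val + k ∨ q.val + 1 < l ∨ n + 1 ≤ q.val + l) := by
    simpa [frameM] using hpq
  push_neg at hfalse
  obtain ⟨h1, h2, h3, h4⟩ := hfalse
  obtain ⟨r, hr, hrlt, hreq, hrgt⟩ :=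
    place_exists (k := k) (n := n) i₀.val p.val i₀.isLt p.isLt (by have := i₀.isLt; omega)
      (by omega)
  obtain ⟨c, hc, hclt, hceq, hcgt⟩ :=
    place_exists (k := l) (n := n) j₀.val q.val j₀.isLt q.isLt (by have := j₀.isLt; omega)
      (by omega)
  refine mk_occ hpq hP hr hc (Fin.ext (hreq i₀ rfl)) (Fin.ext (hceq j₀ rfl)) ?_
  intro i j hij hcase
  have hkn : k ≤ n := by omega
  have hln : l ≤ n := by omega
  simp only [frameM, decide_eq_true_eq]
  rcases not_and_or.mp hcase with hne | hne
  · have hne' : i.val ≠ i₀.val := fun h => hne (Fin.ext h)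
    rcases Nat.lt_or_ge i.val i₀.val with hlt | hge
    · left; have := hrlt i hlt; have := i₀.isLt; omega
    · have hgt : i₀.val < i.val := by omega
      right; left; have := hrgt i hgt; have := i.isLt; omega
  · have hne' : j.val ≠ j₀.val := fun h => hne (Fin.ext h)
    rcases Nat.lt_or_ge j.val j₀.val with hlt | hge
    · right; right; left; have := hclt j hlt; have := j₀.isLt; omega
    · have hgt : j₀.val < j.val := by omega
      right; right; right; have := hcgt j hgt; have := j.isLt; omega

lemma corner_semisat {k l : ℕ} (hk : 0 < k) (hl : 0 < l) (P : Fin k → Fin l → Bool)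
    (hA : ∃ j : Fin l, P ⟨0, hk⟩ j = true ∧ ∀ i : Fin k, P i j = true → i = ⟨0, hk⟩)
    (hB : ∃ j : Fin l, P ⟨k - 1, Nat.sub_lt hk Nat.one_pos⟩ j = true ∧
      ∀ i : Fin k, P i j = true → i = ⟨k - 1, Nat.sub_lt hk Nat.one_pos⟩)
    (hC : ∃ i : Fin k, P i ⟨0, hl⟩ = true ∧ ∀ j : Fin l, P i j = true → j = ⟨0, hl⟩)
    (hD : ∃ i : Fin k, P i ⟨l - 1, Nat.sub_lt hl Nat.one_pos⟩ = true ∧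
      ∀ j : Fin l, P i j = true → j = ⟨l - 1, Nat.sub_lt hl Nat.one_pos⟩)
    (hE : ∃ (i : Fin k) (j : Fin l), P i j = true ∧
      (∀ i' : Fin k, P i' j = true → i' = i) ∧ (∀ j' : Fin l, P i j' = true → j' = j))
    (n : ℕ) : Semisaturating P (cornerM (k + l) n) := by
  intro p q hpq
  have hpq' : ¬((p.val < k + l ∨ n ≤ p.val + (k + l)) ∧
      (q.val < k + l ∨ n ≤ q.val + (k + l))) := by
    simpa [cornerM] using hpq
  have hpn := p.isLt
  have hqn := q.isLt
  by_cases hpb : p.val < k + l ∨ n ≤ p.val + (k + l)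
  · -- p is in a horizontal band, so q is in the middle
    have hq : ¬(q.val < k + l ∨ n ≤ q.val + (k + l)) := fun h => hpq' ⟨hpb, h⟩
    push_neg at hq
    obtain ⟨hq1, hq2⟩ := hq
    have hn : 2 * (k + l) < n := by omega
    rcases hpb with hp | hp
    · -- p in top band: use the special entry of the first row
      obtain ⟨j₀, hPj₀, huniq⟩ := hA
      obtain ⟨r, hr, hrlt, hreq, hrgt⟩ :=
        place_exists (k := k) (n := n) 0 p.val hk hpn (Nat.zero_le _) (by omega)
      obtain ⟨c, hc, hclt, hceq, hcgt⟩ :=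
        place_exists (k := l) (n := n) j₀.val q.val j₀.isLt hqn
          (by have := j₀.isLt; omega) (by have := j₀.isLt; omega)
      refine mk_occ hpq hPj₀ hr hc (Fin.ext (hreq ⟨0, hk⟩ rfl)) (Fin.ext (hceq j₀ rfl)) ?_
      intro i j hij hcase
      simp only [cornerM, decide_eq_true_eq]
      have hjne : j.val ≠ j₀.val := by
        intro h
        have : j = j₀ := Fin.ext h
        subst this
        exact hcase ⟨huniq i hij, rfl⟩
      constructor
      · rcases Nat.eq_zero_or_pos i.val with h0 | h0
        · left; rw [hreq i h0]; omega
        · right; rw [hrgt i h0]; have := i.isLt; omega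
      · rcases Nat.lt_or_ge j.val j₀.val with hlt | hge
        · left; rw [hclt j hlt]; have := j₀.isLt; omega
        · have hgt : j₀.val < j.val := by omega
          right; rw [hcgt j hgt]; have := j.isLt; omega
    · -- p in bottom band: use the special entry of the last row
      obtain ⟨j₁, hPj₁, huniq⟩ := hB
      obtain ⟨r, hr, hrlt, hreq, hrgt⟩ :=
        place_exists (k := k) (n := n) (k - 1) p.val (by omega) hpn (by omega) (by omega)
      obtain ⟨c, hc, hclt, hceq, hcgt⟩ :=
        place_exists (k := l) (n := n) j₁.val q.val j₁.isLt hqn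
          (by have := j₁.isLt; omega) (by have := j₁.isLt; omega)
      refine mk_occ hpq hPj₁ hr hc (Fin.ext (hreq ⟨k - 1, by omega⟩ rfl))
        (Fin.ext (hceq j₁ rfl)) ?_
      intro i j hij hcase
      simp only [cornerM, decide_eq_true_eq]
      have hjne : j.val ≠ j₁.val := by
        intro h
        have : j = j₁ := Fin.ext h
        subst this
        exact hcase ⟨huniq i hij, rfl⟩
      constructor
      · rcases Nat.lt_or_ge i.val (k - 1) with hlt | hge
        · left; rw [hrlt i hlt]; omega
        · have : i.val = k - 1 := by have := i.isLt; omega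
          right; rw [hreq i this]; omega
      · rcases Nat.lt_or_ge j.val j₁.val with hlt | hge
        · left; rw [hclt j hlt]; have := j₁.isLt; omega
        · have hgt : j₁.val < j.val := by omega
          right; rw [hcgt j hgt]; have := j.isLt; omega
  · -- p is in the middle
    push_neg at hpb
    obtain ⟨hp1, hp2⟩ := hpb
    have hn : 2 * (k + l) < n := by omega
    by_cases hqb : q.val < k + l
    · -- q in left band: use the special entry of the first column
      obtain ⟨i₂, hPi₂, huniq⟩ := hC
      obtain ⟨r, hr, hrlt, hreq, hrgt⟩ :=
        place_exists (k := k) (n := n) i₂.val p.val i₂.isLt hpn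
          (by have := i₂.isLt; omega) (by have := i₂.isLt; omega)
      obtain ⟨c, hc, hclt, hceq, hcgt⟩ :=
        place_exists (k := l) (n := n) 0 q.val hl hqn (Nat.zero_le _) (by omega)
      refine mk_occ hpq hPi₂ hr hc (Fin.ext (hreq i₂ rfl)) (Fin.ext (hceq ⟨0, hl⟩ rfl)) ?_
      intro i j hij hcase
      simp only [cornerM, decide_eq_true_eq]
      have hine : i.val ≠ i₂.val := by
        intro h
        have : i = i₂ := Fin.ext h
        subst this
        exact hcase ⟨rfl, huniq j hij⟩
      constructor
      · rcases Nat.lt_or_ge i.val i₂.val with hlt | hge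
        · left; rw [hrlt i hlt]; have := i₂.isLt; omega
        · have hgt : i₂.val < i.val := by omega
          right; rw [hrgt i hgt]; have := i.isLt; omega
      · rcases Nat.eq_zero_or_pos j.val with h0 | h0
        · left; rw [hceq j h0]; omega
        · right; rw [hcgt j h0]; have := j.isLt; omega
    · by_cases hqb2 : n ≤ q.val + (k + l)
      · -- q in right band: use the special entry of the last column
        obtain ⟨i₃, hPi₃, huniq⟩ := hD
        obtain ⟨r, hr, hrlt, hreq, hrgt⟩ :=
          place_exists (k := k) (n := n) i₃.val p.val i₃.isLt hpn
            (by have := i₃.isLt; omega) (by have := i₃.isLt; omega)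
        obtain ⟨c, hc, hclt, hceq, hcgt⟩ :=
          place_exists (k := l) (n := n) (l - 1) q.val (by omega) hqn (by omega) (by omega)
        refine mk_occ hpq hPi₃ hr hc (Fin.ext (hreq i₃ rfl))
          (Fin.ext (hceq ⟨l - 1, by omega⟩ rfl)) ?_
        intro i j hij hcase
        simp only [cornerM, decide_eq_true_eq]
        have hine : i.val ≠ i₃.val := by
          intro h
          have : i = i₃ := Fin.ext h
          subst this
          exact hcase ⟨rfl, huniq j hij⟩
        constructor
        · rcases Nat.lt_or_ge i.val i₃.val with hlt | hge
          · left; rw [hrlt i hlt]; have := i₃.isLt; omega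
          · have hgt : i₃.val < i.val := by omega
            right; rw [hrgt i hgt]; have := i.isLt; omega
        · rcases Nat.lt_or_ge j.val (l - 1) with hlt | hge
          · left; rw [hclt j hlt]; omega
          · have : j.val = l - 1 := by have := j.isLt; omega
            right; rw [hceq j this]; omega
      · -- both middle: use the doubly isolated entry
        obtain ⟨iE, jE, hPE, huniqI, huniqJ⟩ := hE
        obtain ⟨r, hr, hrlt, hreq, hrgt⟩ :=
          place_exists (k := k) (n := n) iE.val p.val iE.isLt hpn
            (by have := iE.isLt; omega) (by have := iE.isLt; omega)
        obtain ⟨c, hc, hclt, hceq, hcgt⟩ :=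
          place_exists (k := l) (n := n) jE.val q.val jE.isLt hqn
            (by have := jE.isLt; omega) (by have := jE.isLt; omega)
        refine mk_occ hpq hPE hr hc (Fin.ext (hreq iE rfl)) (Fin.ext (hceq jE rfl)) ?_
        intro i j hij hcase
        simp only [cornerM, decide_eq_true_eq]
        have hine : i.val ≠ iE.val := by
          intro h
          have : i = iE := Fin.ext h
          subst this
          exact hcase ⟨rfl, huniqJ j hij⟩
        have hjne : j.val ≠ jE.val := by
          intro h
          have : j = jE := Fin.ext h
          subst this
          exact hcase ⟨huniqI i hij, rfl⟩
        constructor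
        · rcases Nat.lt_or_ge i.val iE.val with hlt | hge
          · left; rw [hrlt i hlt]; have := iE.isLt; omega
          · have hgt : iE.val < i.val := by omega
            right; rw [hrgt i hgt]; have := i.isLt; omega
        · rcases Nat.lt_or_ge j.val jE.val with hlt | hge
          · left; rw [hclt j hlt]; have := jE.isLt; omega
          · have hgt : jE.val < j.val := by omega
            right; rw [hcgt j hgt]; have := j.isLt; omega

lemma lb_weight {k l : ℕ} (hk : 0 < k) (hl : 0 < l) (P : Fin k → Fin l → Bool)
    (hfail : ¬((∃ j : Fin l, P ⟨0, hk⟩ j = true ∧ ∀ i : Fin k, P i j = true → i = ⟨0, hk⟩) ∧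
      (∃ j : Fin l, P ⟨k - 1, Nat.sub_lt hk Nat.one_pos⟩ j = true ∧
        ∀ i : Fin k, P i j = true → i = ⟨k - 1, Nat.sub_lt hk Nat.one_pos⟩) ∧
      (∃ i : Fin k, P i ⟨0, hl⟩ = true ∧ ∀ j : Fin l, P i j = true → j = ⟨0, hl⟩) ∧
      (∃ i : Fin k, P i ⟨l - 1, Nat.sub_lt hl Nat.one_pos⟩ = true ∧
        ∀ j : Fin l, P i j = true → j = ⟨l - 1, Nat.sub_lt hl Nat.one_pos⟩) ∧
      (∃ (i : Fin k) (j : Fin l), P i j = true ∧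
        (∀ i' : Fin k, P i' j = true → i' = i) ∧
        (∀ j' : Fin l, P i j' = true → j' = j))))
    {n : ℕ} (M : Fin n → Fin n → Bool) (hM : Semisaturating P M) : n ≤ weight M := by
  rcases Nat.eq_zero_or_pos n with hn | hn
  · omega
  by_cases hA : (∃ j : Fin l, P ⟨0, hk⟩ j = true ∧ ∀ i : Fin k, P i j = true → i = ⟨0, hk⟩)
  · by_cases hB : (∃ j : Fin l, P ⟨k - 1, by omega⟩ j = true ∧
        ∀ i : Fin k, P i j = true → i = ⟨k - 1, by omega⟩)
    · by_cases hC : (∃ i : Fin k, P i ⟨0, hl⟩ = true ∧ ∀ j : Fin l, P i j = true → j = ⟨0, hl⟩)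
      · by_cases hD : (∃ i : Fin k, P i ⟨l - 1, by omega⟩ = true ∧
            ∀ j : Fin l, P i j = true → j = ⟨l - 1, by omega⟩)
        · -- the doubly isolated entry condition must fail
          have hE : ¬(∃ (i : Fin k) (j : Fin l), P i j = true ∧
              (∀ i' : Fin k, P i' j = true → i' = i) ∧
              (∀ j' : Fin l, P i j' = true → j' = j)) :=
            fun hE => hfail ⟨hA, hB, hC, hD, hE⟩
          by_contra hw
          push_neg at hw
          obtain ⟨p₀, hp₀⟩ := exists_zero_row hw
          obtain ⟨q₀, hq₀⟩ := exists_zero_col hw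
          obtain ⟨r, c, i, j, hr, hc, hPij, hri, hcj, hoth⟩ :=
            semisat_extract hM (hp₀ q₀)
          by_cases hrowu : ∀ i' : Fin k, P i' j = true → i' = i
          · have hcolu : ¬ ∀ j' : Fin l, P i j' = true → j' = j := by
              intro hcolu
              exact hE ⟨i, j, hPij, hrowu, hcolu⟩
            push_neg at hcolu
            obtain ⟨j', hPj', hne⟩ := hcolu
            have := hoth i j' hPj' (Or.inr hne)
            rw [hri] at this
            rw [hp₀ (c j')] at this
            exact absurd this (by simp)
          · push_neg at hrowu
            obtain ⟨i', hPi', hne⟩ := hrowu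
            have := hoth i' j hPi' (Or.inl hne)
            rw [hcj] at this
            rw [hq₀ (r i')] at this
            exact absurd this (by simp)
        · -- hD fails: every row of M contains a one
          push_neg at hD
          apply weight_ge_of_rows
          intro p
          by_cases h0 : M p ⟨n - 1, by omega⟩ = true
          · exact ⟨_, h0⟩
          · have h0' : M p ⟨n - 1, by omega⟩ = false := by simpa using h0
            obtain ⟨r, c, i, j, hr, hc, hPij, hri, hcj, hoth⟩ := semisat_extract hM h0'
            have hj : j.val = l - 1 := by
              by_contra hjj
              have hd : j.val + (l - 1 - j.val) < l := by have := j.isLt; omega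
              have := strictMono_add_lt hc (l - 1 - j.val) j hd
              rw [hcj] at this
              simp only at this
              have := j.isLt
              omega
            obtain ⟨j', hPj', hne⟩ := hD i (by
              have : j = ⟨l - 1, by omega⟩ := Fin.ext hj
              rwa [this] at hPij)
            refine ⟨c j', ?_⟩
            rw [← hri]
            refine hoth i j' hPj' (Or.inr ?_)
            intro h; subst h
            exact hne (Fin.ext hj)
      · -- hC fails
        push_neg at hC
        apply weight_ge_of_rows
        intro p
        by_cases h0 : M p ⟨0, hn⟩ = true
        · exact ⟨_, h0⟩
        · have h0' : M p ⟨0, hn⟩ = false := by simpa using h0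
          obtain ⟨r, c, i, j, hr, hc, hPij, hri, hcj, hoth⟩ := semisat_extract hM h0'
          have hj : j.val = 0 := by
            have := strictMono_val_le hc j
            rw [hcj] at this
            simpa using this
          obtain ⟨j', hPj', hne⟩ := hC i (by
            have : j = ⟨0, hl⟩ := Fin.ext hj
            rwa [this] at hPij)
          refine ⟨c j', ?_⟩
          rw [← hri]
          refine hoth i j' hPj' (Or.inr ?_)
          intro h; subst h
          exact hne (Fin.ext hj)
    · -- hB fails
      push_neg at hB
      apply weight_ge_of_cols
      intro q
      by_cases h0 : M ⟨n - 1, by omega⟩ q = true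
      · exact ⟨_, h0⟩
      · have h0' : M ⟨n - 1, by omega⟩ q = false := by simpa using h0
        obtain ⟨r, c, i, j, hr, hc, hPij, hri, hcj, hoth⟩ := semisat_extract hM h0'
        have hi : i.val = k - 1 := by
          by_contra hii
          have hd : i.val + (k - 1 - i.val) < k := by have := i.isLt; omega
          have := strictMono_add_lt hr (k - 1 - i.val) i hd
          rw [hri] at this
          simp only at this
          have := i.isLt
          omega
        obtain ⟨i', hPi', hne⟩ := hB j (by
          have : i = ⟨k - 1, by omega⟩ := Fin.ext hi
          rwa [this] at hPij)
        refine ⟨r i', ?_⟩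
        rw [← hcj]
        refine hoth i' j hPi' (Or.inl ?_)
        intro h; subst h
        exact hne (Fin.ext hi)
  · -- hA fails
    push_neg at hA
    apply weight_ge_of_cols
    intro q
    by_cases h0 : M ⟨0, hn⟩ q = true
    · exact ⟨_, h0⟩
    · have h0' : M ⟨0, hn⟩ q = false := by simpa using h0
      obtain ⟨r, c, i, j, hr, hc, hPij, hri, hcj, hoth⟩ := semisat_extract hM h0'
      have hi : i.val = 0 := by
        have := strictMono_val_le hr i
        rw [hri] at this
        simpa using this
      obtain ⟨i', hPi', hne⟩ := hA j (by
        have : i = ⟨0, hk⟩ := Fin.ext hi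
        rwa [this] at hPij)
      refine ⟨r i', ?_⟩
      rw [← hcj]
      refine hoth i' j hPi' (Or.inl ?_)
      intro h; subst h
      exact hne (Fin.ext hi)

lemma allones_semisat {k l n : ℕ} (P : Fin k → Fin l → Bool) :
    Semisaturating P (fun _ _ => true : Fin n → Fin n → Bool) := by
  intro p q h
  simp at h

lemma ssat_le {k l n : ℕ} (P : Fin k → Fin l → Bool) (M : Fin n → Fin n → Bool)
    (h : Semisaturating P M) : ssatF P n n ≤ weight M := by
  unfold ssatF
  exact Nat.sInf_le ⟨M, h, rfl⟩

lemma le_ssat {k l n a : ℕ} (P : Fin k → Fin l → Bool)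
    (h : ∀ M : Fin n → Fin n → Bool, Semisaturating P M → a ≤ weight M) :
    a ≤ ssatF P n n := by
  unfold ssatF
  refine le_csInf ⟨weight (fun _ _ => true : Fin n → Fin n → Bool),
    (fun _ _ => true : Fin n → Fin n → Bool), allones_semisat P, rfl⟩ ?_
  rintro w ⟨M, hM, rfl⟩
  exact h M hM

theorem ssat_characterization {k l : ℕ} (hk : 0 < k) (hl : 0 < l)
    (P : Fin k → Fin l → Bool) (hP : ∃ i j, P i j = true) :
    (((∃ j : Fin l, P ⟨0, hk⟩ j = true ∧ ∀ i : Fin k, P i j = true → i = ⟨0, hk⟩) ∧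
      (∃ j : Fin l, P ⟨k - 1, by omega⟩ j = true ∧
        ∀ i : Fin k, P i j = true → i = ⟨k - 1, by omega⟩) ∧
      (∃ i : Fin k, P i ⟨0, hl⟩ = true ∧ ∀ j : Fin l, P i j = true → j = ⟨0, hl⟩) ∧
      (∃ i : Fin k, P i ⟨l - 1, by omega⟩ = true ∧
        ∀ j : Fin l, P i j = true → j = ⟨l - 1, by omega⟩) ∧
      (∃ (i : Fin k) (j : Fin l), P i j = true ∧
        (∀ i' : Fin k, P i' j = true → i' = i) ∧
        (∀ j' : Fin l, P i j' = true → j' = j)))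
      ↔ (∃ C : ℕ, ∀ n : ℕ, ssatF P n n ≤ C)) ∧
    (¬((∃ j : Fin l, P ⟨0, hk⟩ j = true ∧ ∀ i : Fin k, P i j = true → i = ⟨0, hk⟩) ∧
      (∃ j : Fin l, P ⟨k - 1, by omega⟩ j = true ∧
        ∀ i : Fin k, P i j = true → i = ⟨k - 1, by omega⟩) ∧
      (∃ i : Fin k, P i ⟨0, hl⟩ = true ∧ ∀ j : Fin l, P i j = true → j = ⟨0, hl⟩) ∧
      (∃ i : Fin k, P i ⟨l - 1, by omega⟩ = true ∧
        ∀ j : Fin l, P i j = true → j = ⟨l - 1, by omega⟩) ∧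
      (∃ (i : Fin k) (j : Fin l), P i j = true ∧
        (∀ i' : Fin k, P i' j = true → i' = i) ∧
        (∀ j' : Fin l, P i j' = true → j' = j))) →
      ∃ C : ℕ, 0 < C ∧ ∀ n : ℕ, n ≤ ssatF P n n ∧ ssatF P n n ≤ C * n) := by
  constructor
  · constructor
    · rintro ⟨hA, hB, hC, hD, hE⟩
      refine ⟨(2 * (k + l)) * (2 * (k + l)), fun n => ?_⟩
      have hsemi := corner_semisat hk hl P hA hB hC hD hE n
      exact le_trans (ssat_le P _ hsemi) (corner_weight_le (k + l) n)
    · rintro ⟨C, hC⟩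
      by_contra hfail
      have hlb : (C + 1) ≤ ssatF P (C + 1) (C + 1) := by
        exact le_ssat P (fun M hM => lb_weight hk hl P hfail M hM)
      have := hC (C + 1)
      omega
  · intro hfail
    obtain ⟨i₀, j₀, hP₀⟩ := hP
    refine ⟨2 * k + 2 * l, by omega, fun n => ⟨?_, ?_⟩⟩
    · exact le_ssat P (fun M hM => lb_weight hk hl P hfail M hM)
    · refine le_trans (ssat_le P _ (frame_semisat P i₀ j₀ hP₀)) ?_
      calc weight (frameM k l n) ≤ 2 * k * n + 2 * l * n := frame_weight_le k l n
        _ = (2 * k + 2 * l) * n := by ring
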